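/- Let (R,m) ⊆ (S,n) be a module-finite local extension of normal local domains with finite separable fraction field extension, and suppose Hom_R(S,R) is generated as an S-module by the trace map Tr : S → R, where S acts on Hom_R(S,R) by premultiplication (s·φ)(x) = φ(sx). Then for every S-module N, every R-linear map ψ : N → R factors as ψ = Tr ∘ g for some S-linear map g : N → S; moreover, if ψ is surjective then g is surjective. Consequently, if N has no nonzero free S-module direct summand, then N has no nonzero free R-module direct summand. -/

import Mathlib

set_option linter.unusedSectionVars false
set_option synthInstance.maxHeartbeats 1000000
set_option maxHeartbeats 1000000

universe v

section Aux
variable {R S K L : Type*}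
    [CommRing R] [IsDomain R] [IsIntegrallyClosed R]
    [CommRing S] [IsDomain S] [IsIntegrallyClosed S]
    [Algebra R S] [Module.Finite R S]
    [Field K] [Field L] [Algebra R K] [IsFractionRing R K]
    [Algebra S L] [IsFractionRing S L]
    [Algebra K L] [Algebra R L] [IsScalarTower R S L] [IsScalarTower R K L]
    [FiniteDimensional K L] [Algebra.IsSeparable K L]

theorem tr_inj_aux (Tr : S →ₗ[R] R)
    (hTr : ∀ s : S, algebraMap R K (Tr s) = Algebra.trace K L (algebraMap S L s))
    (s : S) (h : ∀ x : S, Tr (s * x) = 0) : s = 0 := by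
  have hRL : Function.Injective (algebraMap R L) := by
    rw [IsScalarTower.algebraMap_eq R K L]
    exact (algebraMap K L).injective.comp (IsFractionRing.injective R K)
  have key : ∀ y : L, Algebra.traceForm K L (algebraMap S L s) y = 0 := by
    intro y
    haveI := Algebra.IsAlgebraic.of_finite K L
    have halg : IsAlgebraic R y := (IsFractionRing.isAlgebraic_iff R K L).mpr
      (Algebra.IsAlgebraic.isAlgebraic y)
    obtain ⟨z, hz0, hzi⟩ := halg.exists_integral_multiple
    obtain ⟨x, hzy⟩ : ∃ x : integralClosure R L, algebraMap R L z * y = x :=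
      ⟨⟨z • y, hzi⟩, (Algebra.smul_def z y).symm⟩
    have hxS : IsIntegral S (x : L) := (x.2 : IsIntegral R (x : L)).tower_top
    obtain ⟨b, hb⟩ := IsIntegrallyClosed.isIntegral_iff.mp hxS
    have hsm : (algebraMap R K z) • (algebraMap S L s * y)
        = algebraMap S L s * (algebraMap R L z * y) := by
      rw [Algebra.smul_def, ← IsScalarTower.algebraMap_apply R K L]; ring
    have h1 : algebraMap R K z • Algebra.trace K L (algebraMap S L s * y)
        = Algebra.trace K L (algebraMap S L s * (algebraMap R L z * y)) := by
      rw [← map_smul, hsm]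
    have h2 : Algebra.trace K L (algebraMap S L s * (algebraMap R L z * y)) = 0 := by
      rw [hzy, ← hb, ← map_mul, ← hTr, h, map_zero]
    have hzK : algebraMap R K z ≠ 0 := fun hc => hz0 (IsFractionRing.injective R K (by simpa using hc))
    have := h1.trans h2
    rw [smul_eq_mul, mul_eq_zero] at this
    simpa [Algebra.traceForm] using this.resolve_left hzK
  have := (traceForm_nondegenerate K L).1 _ key
  exact IsFractionRing.injective S L (by simpa using this)

theorem tr_mem_aux [IsLocalRing R] [IsLocalRing S] (Tr : S →ₗ[R] R)
    (hTr : ∀ s : S, algebraMap R K (Tr s) = Algebra.trace K L (algebraMap S L s))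
    (a : S) (ha : a ∈ IsLocalRing.maximalIdeal S) :
    Tr a ∈ IsLocalRing.maximalIdeal R := by
  classical
  set Ω := AlgebraicClosure K with hΩ
  -- the embeddings
  let F : (L →ₐ[K] Ω) → (S →ₐ[R] Ω) := fun σ =>
    { toRingHom := (σ : L →+* Ω).comp (algebraMap S L)
      commutes' := fun r => by
        show σ (algebraMap S L (algebraMap R S r)) = _
        rw [← IsScalarTower.algebraMap_apply R S L, IsScalarTower.algebraMap_apply R K L,
          σ.commutes, ← IsScalarTower.algebraMap_apply R K Ω] }
  have hint : ∀ (σ : L →ₐ[K] Ω) (s : S), IsIntegral R (F σ s) := fun σ s =>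
    ((Algebra.IsIntegral.isIntegral (R := R) s).map (F σ))
  set T := integralClosure R Ω with hT
  haveI : Nontrivial T := ⟨⟨1, 0, fun hc => one_ne_zero (congrArg Subtype.val hc)⟩⟩
  obtain ⟨P, hP⟩ := Ideal.exists_maximal T
  -- each conjugate of `a` lies in `P`
  have hmem : ∀ σ : (L →ₐ[K] Ω), (⟨F σ a, hint σ a⟩ : T) ∈ P := by
    intro σ
    let g : S →+* T := (F σ).toRingHom.codRestrict T.toSubring (fun s => hint σ s)
    letI : Algebra S T := g.toAlgebra
    haveI : IsScalarTower R S T := IsScalarTower.of_algebraMap_eq fun r => by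
      exact Subtype.ext ((F σ).commutes r).symm
    haveI : Algebra.IsIntegral S T := Algebra.IsIntegral.tower_top R
    haveI := Ideal.isMaximal_comap_of_isIntegral_of_isMaximal (R := S) P
    have hcom : P.comap (algebraMap S T) = IsLocalRing.maximalIdeal S :=
      IsLocalRing.eq_maximalIdeal this
    have : a ∈ P.comap (algebraMap S T) := hcom ▸ ha
    exact this
  have hsum : (∑ σ : L →ₐ[K] Ω, (⟨F σ a, hint σ a⟩ : T)) ∈ P :=
    Ideal.sum_mem P fun σ _ => hmem σ
  have heq : algebraMap R T (Tr a) = ∑ σ : L →ₐ[K] Ω, (⟨F σ a, hint σ a⟩ : T) := by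
    apply Subtype.ext
    rw [AddSubmonoidClass.coe_finset_sum]
    show algebraMap R Ω (Tr a) = _
    rw [IsScalarTower.algebraMap_apply R K Ω, hTr, trace_eq_sum_embeddings (E := Ω)]
    rfl
  by_contra hnot
  have hu : IsUnit (Tr a) := not_not.mp
    (by simpa [IsLocalRing.mem_maximalIdeal, mem_nonunits_iff] using hnot)
  exact hP.ne_top (Ideal.eq_top_of_isUnit_mem P (heq ▸ hsum) (hu.map (algebraMap R T)))

end Aux

/-- Suppose `Hom_R(S,R)` is generated as an `S`-module (via premultiplication)
by the trace map `Tr : S → R`.  Then every `R`-linear `ψ : N → R` on an `S`-module `N` factors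
as `ψ = Tr ∘ g` with `g : N → S` `S`-linear, surjective whenever `ψ` is; consequently if `N` has
no nonzero free `S`-module direct summand then it has no nonzero free `R`-module direct summand. -/
theorem factor_through_trace
    (R S K L : Type*)
    [CommRing R] [IsDomain R] [IsNoetherianRing R] [IsLocalRing R] [IsIntegrallyClosed R]
    [CommRing S] [IsDomain S] [IsNoetherianRing S] [IsLocalRing S] [IsIntegrallyClosed S]
    [Algebra R S] [Module.Finite R S]
    (hinj : Function.Injective (algebraMap R S))
    [IsLocalHom (algebraMap R S)]
    [Field K] [Field L] [Algebra R K] [IsFractionRing R K]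
    [Algebra S L] [IsFractionRing S L]
    [Algebra K L] [Algebra R L] [IsScalarTower R S L] [IsScalarTower R K L]
    [FiniteDimensional K L] [Algebra.IsSeparable K L]
    (Tr : S →ₗ[R] R)
    (hTr : ∀ s : S, algebraMap R K (Tr s) = Algebra.trace K L (algebraMap S L s))
    (hgen : ∀ ψ : S →ₗ[R] R, ∃ s : S, ∀ x : S, ψ x = Tr (s * x)) :
    ∀ (N : Type v) [AddCommGroup N] [Module R N] [Module S N] [IsScalarTower R S N],
      (∀ ψ : N →ₗ[R] R, ∃ g : N →ₗ[S] S, (∀ x : N, ψ x = Tr (g x)) ∧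
        (Function.Surjective ψ → Function.Surjective g)) ∧
      ((¬ ∃ g : N →ₗ[S] S, Function.Surjective g) →
        ¬ ∃ ψ : N →ₗ[R] R, Function.Surjective ψ) := by
  intro N _ _ _ _
  have huniq : ∀ a b : S, (∀ x : S, Tr (a * x) = Tr (b * x)) → a = b := by
    intro a b hab
    have : a - b = 0 := tr_inj_aux (K := K) (L := L) Tr hTr (a - b) fun x => by
      rw [sub_mul, map_sub, hab x, sub_self]
    exact sub_eq_zero.mp this
  have main : ∀ ψ : N →ₗ[R] R, ∃ g : N →ₗ[S] S, (∀ x : N, ψ x = Tr (g x)) ∧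
      (Function.Surjective ψ → Function.Surjective g) := by
    intro ψ
    -- the functional `s ↦ ψ (s • x)`
    let Φ : N → (S →ₗ[R] R) := fun x =>
      { toFun := fun s => ψ (s • x)
        map_add' := fun s t => by simp [add_smul]
        map_smul' := fun r s => by simp [smul_assoc] }
    let g0 : N → S := fun x => Classical.choose (hgen (Φ x))
    have hg0 : ∀ (x : N) (t : S), ψ (t • x) = Tr (g0 x * t) := fun x t =>
      Classical.choose_spec (hgen (Φ x)) t
    have hadd : ∀ x y : N, g0 (x + y) = g0 x + g0 y := by
      intro x y
      refine huniq _ _ fun t => ?_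
      rw [← hg0, add_mul, map_add, ← hg0, ← hg0, smul_add, map_add]
    have hsmul : ∀ (s : S) (x : N), g0 (s • x) = s * g0 x := by
      intro s x
      refine huniq _ _ fun t => ?_
      rw [← hg0, smul_smul, hg0 x (t * s)]
      congr 1
      ring
    let g : N →ₗ[S] S :=
      { toFun := g0
        map_add' := hadd
        map_smul' := fun s x => by
          simp only [AddHom.coe_mk, RingHom.id_apply, smul_eq_mul]
          exact hsmul s x }
    have hfac : ∀ x : N, ψ x = Tr (g x) := by
      intro x
      have := hg0 x 1
      rwa [one_smul, mul_one] at this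
    refine ⟨g, hfac, ?_⟩
    intro hψ
    rw [← LinearMap.range_eq_top]
    by_contra hne
    have hle : LinearMap.range g ≤ IsLocalRing.maximalIdeal S :=
      IsLocalRing.le_maximalIdeal hne
    obtain ⟨u, hu⟩ := hψ 1
    have h1 : Tr (g u) = 1 := by rw [← hfac, hu]
    have : (1 : R) ∈ IsLocalRing.maximalIdeal R := by
      rw [← h1]
      exact tr_mem_aux (K := K) (L := L) Tr hTr (g u) (hle ⟨u, rfl⟩)
    exact (IsLocalRing.maximalIdeal.isMaximal R).ne_top ((Ideal.eq_top_iff_one _).mpr this)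
  refine ⟨main, ?_⟩
  rintro hno ⟨ψ, hψ⟩
  obtain ⟨g, -, hs⟩ := main ψ
  exact hno ⟨g, hs hψ⟩
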